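/- Let n ≥ 4 and let I be a proper subset of J = {1, 2, …, n} with 2 ≤ |I| < n. Then there exist an element j ∈ J ∖ I and two elements i_s, i_t ∈ I such that |j − i_s| = 1 and |j − i_t| > 1. -/
import Mathlib


/-- Let `n ≥ 4` and let `I` be a proper subset of
`J = {1, 2, …, n}` with `2 ≤ |I| < n`.  Then there exist `j ∈ J \ I` and
`i_s, i_t ∈ I` with `|j - i_s| = 1` and `|j - i_t| > 1`. -/
theorem exists_adjacent_and_far (n : ℕ) (hn : 4 ≤ n) (I : Finset ℕ)
    (hIJ : I ⊂ Finset.Icc 1 n) (hcard : 2 ≤ I.card) (hlt : I.card < n) :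
    ∃ j ∈ Finset.Icc 1 n \ I, ∃ is ∈ I, ∃ it ∈ I,
      |(j : ℤ) - (is : ℤ)| = 1 ∧ 1 < |(j : ℤ) - (it : ℤ)| := by
  have hsub : I ⊆ Finset.Icc 1 n := hIJ.subset
  have hI_ne : I.Nonempty := Finset.card_pos.mp (by omega)
  have hC : (Finset.Icc 1 n \ I).Nonempty := by
    obtain ⟨c, hc1, hc2⟩ := Finset.exists_of_ssubset hIJ
    exact ⟨c, Finset.mem_sdiff.mpr ⟨hc1, hc2⟩⟩
  -- Step 1: an adjacent pair j ∉ I, i ∈ I with |j - i| = 1.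
  obtain ⟨j, hjJ, hjI, i, hiI, hadj⟩ :
      ∃ j, j ∈ Finset.Icc 1 n ∧ j ∉ I ∧ ∃ i ∈ I, (i = j + 1 ∨ i + 1 = j) := by
    set j0 := (Finset.Icc 1 n \ I).min' hC with hj0
    have hj0mem := Finset.min'_mem _ hC
    rw [Finset.mem_sdiff, Finset.mem_Icc] at hj0mem
    by_cases h1 : j0 = 1
    · -- 1 ∉ I, take the minimum m of I and j = m - 1
      have h1I : (1 : ℕ) ∉ I := h1 ▸ hj0mem.2
      set m := I.min' hI_ne with hm
      have hmI := I.min'_mem hI_ne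
      have hmIcc := Finset.mem_Icc.mp (hsub hmI)
      have hm2 : 2 ≤ m := by
        by_contra h
        push_neg at h
        have hm1 : m = 1 := by omega
        exact h1I (hm1 ▸ hmI)
      refine ⟨m - 1, Finset.mem_Icc.mpr ⟨by omega, by omega⟩, ?_, m, hmI, Or.inl (by omega)⟩
      intro hmem
      have := I.min'_le _ hmem
      omega
    · -- j0 ≥ 2, and j0 - 1 ∈ I by minimality
      have h2 : 2 ≤ j0 := by omega
      have hmemI : j0 - 1 ∈ I := by
        by_contra hno
        have : j0 - 1 ∈ Finset.Icc 1 n \ I :=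
          Finset.mem_sdiff.mpr ⟨Finset.mem_Icc.mpr ⟨by omega, by omega⟩, hno⟩
        have := Finset.min'_le _ _ this
        omega
      exact ⟨j0, Finset.mem_Icc.mpr ⟨by omega, hj0mem.1.2⟩, hj0mem.2, j0 - 1, hmemI,
        Or.inr (by omega)⟩
  have hjIcc := Finset.mem_Icc.mp hjJ
  -- Step 2: either some element of I is far from j, or I = {j-1, j+1}.
  by_cases hfar : ∃ t ∈ I, 1 < |(j : ℤ) - (t : ℤ)|
  · obtain ⟨t, htI, ht⟩ := hfar
    refine ⟨j, Finset.mem_sdiff.mpr ⟨hjJ, hjI⟩, i, hiI, t, htI, ?_, ht⟩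
    rcases hadj with h | h <;>
      · rw [abs_eq (by norm_num : (0:ℤ) ≤ 1)]; omega
  · push_neg at hfar
    -- every element of I is within distance 1 of j, and j ∉ I
    have hshape : ∀ t ∈ I, t + 1 = j ∨ t = j + 1 := by
      intro t htI
      have h1 := hfar t htI
      have hne : t ≠ j := fun h => hjI (h ▸ htI)
      rw [abs_le] at h1
      omega
    obtain ⟨a, haI, b, hbI, hab⟩ := Finset.one_lt_card.mp hcard
    have ha := hshape a haI
    have hb := hshape b hbI
    -- wlog a + 1 = j and b = j + 1
    obtain ⟨a, haI, b, hbI, ha, hb⟩ :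
        ∃ a ∈ I, ∃ b ∈ I, a + 1 = j ∧ b = j + 1 := by
      rcases ha with ha | ha <;> rcases hb with hb | hb
      · omega
      · exact ⟨a, haI, b, hbI, ha, hb⟩
      · exact ⟨b, hbI, a, haI, hb, ha⟩
      · omega
    have haIcc := Finset.mem_Icc.mp (hsub haI)
    have hbIcc := Finset.mem_Icc.mp (hsub hbI)
    by_cases hcase : j + 2 ≤ n
    · -- take j' = j + 2
      have hj'I : j + 2 ∉ I := by
        intro hmem
        rcases hshape _ hmem with h | h <;> omega
      refine ⟨j + 2, Finset.mem_sdiff.mpr ⟨Finset.mem_Icc.mpr ⟨by omega, hcase⟩, hj'I⟩,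
        b, hbI, a, haI, ?_, ?_⟩
      · rw [abs_eq (by norm_num : (0:ℤ) ≤ 1)]; omega
      · rw [lt_abs]; omega
    · -- j + 1 = n, take j' = j - 2 (here j ≥ 3)
      have hjn : j + 1 = n := by omega
      have hj3 : 3 ≤ j := by omega
      have hj'I : j - 2 ∉ I := by
        intro hmem
        rcases hshape _ hmem with h | h <;> omega
      refine ⟨j - 2, Finset.mem_sdiff.mpr ⟨Finset.mem_Icc.mpr ⟨by omega, by omega⟩, hj'I⟩,
        a, haI, b, hbI, ?_, ?_⟩
      · rw [abs_eq (by norm_num : (0:ℤ) ≤ 1)]; omega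
      · rw [lt_abs]; omega
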